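/- Let V be a real Hilbert space, N ≥ 1, τ > 0. Let B : V →L[ℝ] V be continuous linear, symmetric and nonnegative; let K : V → V be strongly monotone with constant γ > 0 and Lipschitz with constant L; let f : ZMod N → V. Let K̂ : V ≃L[ℝ] V be a continuous linear equivalence that is symmetric and elliptic (⟪K̂ u, u⟫ ≥ c‖u‖² for some c > 0). Assume there is q with 0 ≤ q < 1 such that for all u, v ∈ V, with r = K̂ (u − v) − (K u − K v), one has ⟪K̂⁻¹ r, r⟫ ≤ q² ⟪K̂ (u − v), u − v⟫. Let u : ZMod N → V satisfy (1/τ) • B (u n − u (n−1)) + K (u n) = f n for all n, and let U : ℕ → (ZMod N → V) satisfy, for every k and n, (1/τ) • B (U (k+1) n − U (k+1) (n−1)) + K̂ (U (k+1) n) = f n + K̂ (U k n) − K (U k n). Then for every k: ∑_{n} ⟪K̂ (U k n − u n), U k n − u n⟫ ≤ q^{2k} · ∑_{n} ⟪K̂ (U 0 n − u n), U 0 n − u n⟫, and for every n the sequence (U k n) converges to u n in V as k → ∞. -/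

import Mathlib

open RealInnerProductSpace Filter Topology

/-- Theorem 3, linear convergence: geometric error bound q^k in the K̂-norm
and convergence of the fixed-point iterates to the solution. -/
theorem stmt_5 {V : Type*} [NormedAddCommGroup V] [InnerProductSpace ℝ V]
    [CompleteSpace V]
    (N : ℕ) [NeZero N] (τ : ℝ) (hτ : 0 < τ)
    (B : V →L[ℝ] V)
    (hBsymm : ∀ u v : V, ⟪B u, v⟫ = ⟪u, B v⟫)
    (hBnonneg : ∀ u : V, 0 ≤ ⟪B u, u⟫)
    (K : V → V) (γ : ℝ) (hγ : 0 < γ)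
    (hKmono : ∀ u v : V, γ * ‖u - v‖ ^ 2 ≤ ⟪K u - K v, u - v⟫)
    (L : ℝ) (hKlip : ∀ u v : V, ‖K u - K v‖ ≤ L * ‖u - v‖)
    (f : ZMod N → V)
    (Khat : V ≃L[ℝ] V)
    (hKhatsymm : ∀ u v : V, ⟪Khat u, v⟫ = ⟪u, Khat v⟫)
    (c : ℝ) (hc : 0 < c)
    (hKhatell : ∀ u : V, c * ‖u‖ ^ 2 ≤ ⟪Khat u, u⟫)
    (q : ℝ) (hq0 : 0 ≤ q) (hq1 : q < 1)
    (hA3 : ∀ u v : V,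
      ⟪Khat.symm (Khat (u - v) - (K u - K v)), Khat (u - v) - (K u - K v)⟫ ≤
        q ^ 2 * ⟪Khat (u - v), u - v⟫)
    (u : ZMod N → V)
    (hu : ∀ n : ZMod N, (1 / τ) • B (u n - u (n - 1)) + K (u n) = f n)
    (U : ℕ → ZMod N → V)
    (hU : ∀ (k : ℕ) (n : ZMod N),
      (1 / τ) • B (U (k + 1) n - U (k + 1) (n - 1)) + Khat (U (k + 1) n) =
        f n + Khat (U k n) - K (U k n)) :
    (∀ k : ℕ,
      ∑ n : ZMod N, ⟪Khat (U k n - u n), U k n - u n⟫ ≤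
        q ^ (2 * k) * ∑ n : ZMod N, ⟪Khat (U 0 n - u n), U 0 n - u n⟫) ∧
    (∀ n : ZMod N, Tendsto (fun k => U k n) atTop (𝓝 (u n))) := by
  -- nonnegativity of the K̂-form
  have hKpos : ∀ x : V, 0 ≤ ⟪Khat x, x⟫ := fun x =>
    le_trans (by positivity) (hKhatell x)
  -- Cauchy–Schwarz for the K̂-form
  have hcs : ∀ a b : V, ⟪Khat a, b⟫ ^ 2 ≤ ⟪Khat a, a⟫ * ⟪Khat b, b⟫ := by
    intro a b
    by_cases hb : b = 0
    · simp [hb]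
    · have hβ : 0 < ⟪Khat b, b⟫ := by
        refine lt_of_lt_of_le ?_ (hKhatell b)
        have : 0 < ‖b‖ := norm_pos_iff.mpr hb
        positivity
      set t : ℝ := ⟪Khat a, b⟫ / ⟪Khat b, b⟫ with ht
      have h0 : 0 ≤ ⟪Khat (a - t • b), a - t • b⟫ := hKpos _
      have hs : ⟪Khat b, a⟫ = ⟪Khat a, b⟫ := by
        rw [hKhatsymm b a, real_inner_comm]
      have hexp : ⟪Khat (a - t • b), a - t • b⟫ =
          ⟪Khat a, a⟫ - 2 * t * ⟪Khat a, b⟫ + t ^ 2 * ⟪Khat b, b⟫ := by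
        simp only [map_sub, map_smul, inner_sub_left, inner_sub_right,
          real_inner_smul_left, real_inner_smul_right, hs]
        ring
      rw [hexp] at h0
      have htv : t * ⟪Khat b, b⟫ = ⟪Khat a, b⟫ := by
        rw [ht, div_mul_cancel₀ _ hβ.ne']
      nlinarith [h0, hβ, sq_nonneg t]
  -- error sequences
  set E : ℕ → ZMod N → V := fun k n => U k n - u n with hE
  set A : ℕ → ℝ := fun k => ∑ n : ZMod N, ⟪Khat (E k n), E k n⟫ with hA
  have hApos : ∀ k, 0 ≤ A k := fun k =>
    Finset.sum_nonneg fun n _ => hKpos _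
  -- one-step contraction
  have step : ∀ k, A (k + 1) ≤ q ^ 2 * A k := by
    intro k
    set R : ZMod N → V := fun n =>
      Khat (E k n) - (K (U k n) - K (u n)) with hR
    -- error equation
    have key : ∀ n, (1 / τ) • B (E (k+1) n - E (k+1) (n - 1)) + Khat (E (k+1) n) = R n := by
      intro n
      have h1 := hU k n
      have h2 := hu n
      have hb : B (E (k+1) n - E (k+1) (n - 1))
          = B (U (k+1) n - U (k+1) (n-1)) - B (u n - u (n-1)) := by
        rw [← map_sub]; congr 1; simp only [hE]; abel
      rw [hb, smul_sub, eq_sub_of_add_eq h1, eq_sub_of_add_eq h2]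
      simp only [hE, hR, map_sub]
      abel
    -- the B-sum is nonnegative
    have hBsum : 0 ≤ ∑ n : ZMod N, ⟪B (E (k+1) n - E (k+1) (n - 1)), E (k+1) n⟫ := by
      have hpt : ∀ x y : V, 2 * ⟪B (x - y), x⟫ =
          ⟪B x, x⟫ - ⟪B y, y⟫ + ⟪B (x - y), x - y⟫ := by
        intro x y
        have hs : ⟪B y, x⟫ = ⟪B x, y⟫ := by rw [hBsymm y x, real_inner_comm]
        simp only [map_sub, inner_sub_left, inner_sub_right, hs]
        ring
      have hshift : ∑ n : ZMod N, ⟪B (E (k+1) (n - 1)), E (k+1) (n - 1)⟫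
          = ∑ n : ZMod N, ⟪B (E (k+1) n), E (k+1) n⟫ :=
        Fintype.sum_equiv (Equiv.subRight (1 : ZMod N)) _ _ (fun n => rfl)
      have h2 : 2 * ∑ n : ZMod N, ⟪B (E (k+1) n - E (k+1) (n - 1)), E (k+1) n⟫
          = ∑ n : ZMod N, ⟪B (E (k+1) n - E (k+1) (n - 1)), E (k+1) n - E (k+1) (n - 1)⟫ := by
        rw [Finset.mul_sum]
        rw [Finset.sum_congr rfl (fun n _ => hpt (E (k+1) n) (E (k+1) (n-1)))]
        rw [Finset.sum_add_distrib, Finset.sum_sub_distrib, hshift]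
        ring_nf
      have h3 : 0 ≤ ∑ n : ZMod N, ⟪B (E (k+1) n - E (k+1) (n - 1)), E (k+1) n - E (k+1) (n - 1)⟫ :=
        Finset.sum_nonneg fun n _ => hBnonneg _
      linarith [h2 ▸ h3]
    -- energy identity
    have hen : ∀ n : ZMod N, ⟪Khat (E (k+1) n), E (k+1) n⟫ =
        ⟪R n, E (k+1) n⟫ - (1 / τ) * ⟪B (E (k+1) n - E (k+1) (n - 1)), E (k+1) n⟫ := by
      intro n
      have := congrArg (fun z => ⟪z, E (k+1) n⟫) (key n)
      simp only [inner_add_left, real_inner_smul_left] at this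
      linarith
    -- pointwise Cauchy–Schwarz dual bound
    have hpt : ∀ n : ZMod N, ⟪R n, E (k+1) n⟫ ≤
        q * Real.sqrt ⟪Khat (E k n), E k n⟫ * Real.sqrt ⟪Khat (E (k+1) n), E (k+1) n⟫ := by
      intro n
      set a : V := Khat.symm (R n) with ha
      have haR : Khat a = R n := Khat.apply_symm_apply _
      have hdual : ⟪Khat a, a⟫ ≤ q ^ 2 * ⟪Khat (E k n), E k n⟫ := by
        have h1 : ⟪Khat a, a⟫ = ⟪Khat.symm (R n), R n⟫ := by
          rw [haR, real_inner_comm]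
        rw [h1]
        have := hA3 (U k n) (u n)
        simpa only [hE, hR] using this
      have hcs1 : ⟪R n, E (k+1) n⟫ ^ 2 ≤
          (q ^ 2 * ⟪Khat (E k n), E k n⟫) * ⟪Khat (E (k+1) n), E (k+1) n⟫ := by
        calc ⟪R n, E (k+1) n⟫ ^ 2 = ⟪Khat a, E (k+1) n⟫ ^ 2 := by rw [haR]
          _ ≤ ⟪Khat a, a⟫ * ⟪Khat (E (k+1) n), E (k+1) n⟫ := hcs a _
          _ ≤ _ := by
              apply mul_le_mul_of_nonneg_right hdual (hKpos _)
      calc ⟪R n, E (k+1) n⟫ ≤ |⟪R n, E (k+1) n⟫| := le_abs_self _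
        _ = Real.sqrt (⟪R n, E (k+1) n⟫ ^ 2) := (Real.sqrt_sq_eq_abs _).symm
        _ ≤ Real.sqrt ((q ^ 2 * ⟪Khat (E k n), E k n⟫) * ⟪Khat (E (k+1) n), E (k+1) n⟫) :=
            Real.sqrt_le_sqrt hcs1
        _ = q * Real.sqrt ⟪Khat (E k n), E k n⟫ * Real.sqrt ⟪Khat (E (k+1) n), E (k+1) n⟫ := by
            rw [Real.sqrt_mul (mul_nonneg (sq_nonneg q) (hKpos _)),
              Real.sqrt_mul (sq_nonneg q), Real.sqrt_sq hq0]
    -- sum up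
    have hA1 : A (k + 1) ≤ q * ∑ n : ZMod N,
        Real.sqrt ⟪Khat (E k n), E k n⟫ * Real.sqrt ⟪Khat (E (k+1) n), E (k+1) n⟫ := by
      rw [hA, Finset.mul_sum]
      calc ∑ n : ZMod N, ⟪Khat (E (k+1) n), E (k+1) n⟫
          = ∑ n : ZMod N, (⟪R n, E (k+1) n⟫
              - (1 / τ) * ⟪B (E (k+1) n - E (k+1) (n - 1)), E (k+1) n⟫) :=
            Finset.sum_congr rfl (fun n _ => hen n)
        _ = (∑ n : ZMod N, ⟪R n, E (k+1) n⟫)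
              - (1 / τ) * ∑ n : ZMod N, ⟪B (E (k+1) n - E (k+1) (n - 1)), E (k+1) n⟫ := by
            rw [Finset.sum_sub_distrib, Finset.mul_sum]
        _ ≤ ∑ n : ZMod N, ⟪R n, E (k+1) n⟫ := by
            have : 0 ≤ (1 / τ) * ∑ n : ZMod N,
                ⟪B (E (k+1) n - E (k+1) (n - 1)), E (k+1) n⟫ := by positivity
            linarith
        _ ≤ ∑ n : ZMod N, q * (Real.sqrt ⟪Khat (E k n), E k n⟫
              * Real.sqrt ⟪Khat (E (k+1) n), E (k+1) n⟫) :=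
            Finset.sum_le_sum (fun n _ => by
              have := hpt n; linarith [this])
    -- Cauchy–Schwarz on the sum
    have hS : (∑ n : ZMod N,
        Real.sqrt ⟪Khat (E k n), E k n⟫ * Real.sqrt ⟪Khat (E (k+1) n), E (k+1) n⟫) ^ 2 ≤
        A k * A (k + 1) := by
      have := Finset.sum_mul_sq_le_sq_mul_sq Finset.univ
        (fun n : ZMod N => Real.sqrt ⟪Khat (E k n), E k n⟫)
        (fun n : ZMod N => Real.sqrt ⟪Khat (E (k+1) n), E (k+1) n⟫)
      have h1 : ∑ n : ZMod N, Real.sqrt ⟪Khat (E k n), E k n⟫ ^ 2 = A k :=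
        Finset.sum_congr rfl (fun n _ => Real.sq_sqrt (hKpos _))
      have h2 : ∑ n : ZMod N, Real.sqrt ⟪Khat (E (k+1) n), E (k+1) n⟫ ^ 2 = A (k+1) :=
        Finset.sum_congr rfl (fun n _ => Real.sq_sqrt (hKpos _))
      rw [h1, h2] at this
      exact this
    set S : ℝ := ∑ n : ZMod N,
        Real.sqrt ⟪Khat (E k n), E k n⟫ * Real.sqrt ⟪Khat (E (k+1) n), E (k+1) n⟫ with hSdef
    have hSnn : 0 ≤ S := Finset.sum_nonneg fun n _ => by positivity
    have h1 : A (k+1) * A (k+1) ≤ q ^ 2 * A k * A (k+1) := by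
      calc A (k+1) * A (k+1) ≤ (q * S) * (q * S) :=
            mul_le_mul hA1 hA1 (hApos _) (mul_nonneg hq0 hSnn)
        _ = q ^ 2 * S ^ 2 := by ring
        _ ≤ q ^ 2 * (A k * A (k+1)) := mul_le_mul_of_nonneg_left hS (sq_nonneg q)
        _ = q ^ 2 * A k * A (k+1) := by ring
    rcases (hApos (k+1)).eq_or_lt with h | h
    · rw [← h]
      have := hApos k
      positivity
    · exact le_of_mul_le_mul_right h1 h
  -- geometric bound
  have hgeom : ∀ k : ℕ, A k ≤ q ^ (2 * k) * A 0 := by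
    intro k
    induction k with
    | zero => simp
    | succ k ih =>
      calc A (k + 1) ≤ q ^ 2 * A k := step k
        _ ≤ q ^ 2 * (q ^ (2 * k) * A 0) := by
            apply mul_le_mul_of_nonneg_left ih (by positivity)
        _ = q ^ (2 * (k + 1)) * A 0 := by rw [pow_mul, pow_mul]; ring
  constructor
  · exact hgeom
  · intro n
    have hq2 : q ^ 2 < 1 := by nlinarith
    have hbound : ∀ k : ℕ, ‖E k n‖ ^ 2 ≤ (q ^ 2) ^ k * (A 0 / c) := by
      intro k
      have h1 : c * ‖E k n‖ ^ 2 ≤ ⟪Khat (E k n), E k n⟫ := hKhatell _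
      have h2 : ⟪Khat (E k n), E k n⟫ ≤ A k :=
        Finset.single_le_sum (fun m _ => hKpos (E k m)) (Finset.mem_univ n)
      have h3 : A k ≤ (q ^ 2) ^ k * A 0 := by
        rw [← pow_mul]; exact hgeom k
      have h4 : c * ‖E k n‖ ^ 2 ≤ (q ^ 2) ^ k * A 0 := by linarith
      rw [mul_div_assoc'] ; rw [le_div_iff₀ hc]
      linarith [h4]
    have ht0 : Tendsto (fun k : ℕ => (q ^ 2) ^ k * (A 0 / c)) atTop (𝓝 0) := by
      have := tendsto_pow_atTop_nhds_zero_of_lt_one (by positivity) hq2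
      simpa using this.mul_const (A 0 / c)
    have hsq : Tendsto (fun k => ‖E k n‖ ^ 2) atTop (𝓝 0) :=
      squeeze_zero (fun k => sq_nonneg _) hbound ht0
    have hnorm : Tendsto (fun k => ‖E k n‖) atTop (𝓝 0) := by
      have h := hsq.sqrt
      simp only [Real.sqrt_sq (norm_nonneg _), Real.sqrt_zero] at h
      exact h
    rw [tendsto_iff_norm_sub_tendsto_zero]
    simpa only [hE] using hnorm
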